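/- For 0 < p < 1/2 and 2p < e < 1, the equation (( (1-x)/x )^c + 1)^{-1} = x(1-p) + p(1-x), where c = (1-e)/(1-2p) ∈ (0,1), has at most one solution x in the open interval (0, 1/2). -/

import Mathlib

open Real Set


lemma aux_sinh_lt {t : ℝ} (ht : 0 < t) : Real.sinh t < t * Real.cosh t := by
  have h : StrictMonoOn (fun s => s * Real.cosh s - Real.sinh s) (Set.Ici 0) := by
    apply strictMonoOn_of_deriv_pos (convex_Ici 0)
    · fun_prop
    · intro x hx
      rw [interior_Ici] at hx
      have hd : HasDerivAt (fun s => s * Real.cosh s - Real.sinh s) (x * Real.sinh x) x := by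
        have h1 : HasDerivAt (fun s : ℝ => s * Real.cosh s)
            (1 * Real.cosh x + x * Real.sinh x) x :=
          (hasDerivAt_id x).mul (Real.hasDerivAt_cosh x)
        have h2 := h1.sub (Real.hasDerivAt_sinh x)
        exact h2.congr_deriv (by ring)
      rw [hd.deriv]
      exact mul_pos hx (Real.sinh_pos_iff.2 hx)
  have := h (Set.self_mem_Ici) (Set.mem_Ici.2 ht.le) ht
  simpa using this

lemma aux_sinh_div_mono : StrictMonoOn (fun t => Real.sinh t / t) (Set.Ioi (0:ℝ)) := by
  apply strictMonoOn_of_deriv_pos (convex_Ioi 0)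
  · exact Real.continuous_sinh.continuousOn.div continuousOn_id (fun x hx => ne_of_gt hx)
  · intro x hx
    rw [interior_Ioi] at hx
    have hd : HasDerivAt (fun t => Real.sinh t / t)
        ((Real.cosh x * x - Real.sinh x * 1) / (x ^ 2)) x :=
      (Real.hasDerivAt_sinh x).div (hasDerivAt_id x) (ne_of_gt hx)
    rw [hd.deriv]
    apply div_pos _ (pow_pos hx 2)
    have := aux_sinh_lt hx
    nlinarith

lemma aux_key {u v : ℝ} (hv : 0 < v) (huv : v < u) :
    u * Real.sinh v < v * Real.sinh u := by
  have hu : 0 < u := hv.trans huv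
  have := aux_sinh_div_mono (Set.mem_Ioi.2 hv) (Set.mem_Ioi.2 hu) huv
  rw [div_lt_div_iff₀ hv hu] at this
  linarith

noncomputable def Ufn (x : ℝ) : ℝ := Real.log (1 - x) - Real.log x
noncomputable def Vfn (p x : ℝ) : ℝ :=
  Real.log (1 - (x * (1 - p) + p * (1 - x))) - Real.log (x * (1 - p) + p * (1 - x))

lemma aux_sinhU {x : ℝ} (hx0 : 0 < x) (hx2 : x < 1/2) :
    Real.sinh (Ufn x) = (1 - 2*x) / (2 * (x * (1 - x))) := by
  have h1 : (0:ℝ) < 1 - x := by linarith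
  have h2 : Ufn x = Real.log ((1 - x) / x) := by
    rw [Ufn, Real.log_div (ne_of_gt h1) (ne_of_gt hx0)]
  rw [h2, Real.sinh_log (div_pos h1 hx0)]
  field_simp
  ring

lemma aux_deriv (p : ℝ) (hp0 : 0 < p) (hp1 : p < 1/2) {x : ℝ}
    (hx : x ∈ Set.Ioo (0:ℝ) (1/2)) :
    ∃ d, 0 < d ∧ HasDerivAt (fun x => Vfn p x / Ufn x) d x := by
  obtain ⟨hx0, hx2⟩ := hx
  set R : ℝ := x * (1 - p) + p * (1 - x) with hRdef
  have h1x : (0:ℝ) < 1 - x := by linarith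
  have hR0 : 0 < R := by nlinarith
  have hR2 : R < 1/2 := by nlinarith
  have h1R : (0:ℝ) < 1 - R := by linarith
  have hxR : x < R := by nlinarith
  have hUpos : 0 < Ufn x := by
    have := Real.log_lt_log hx0 (by linarith : x < 1 - x)
    rw [Ufn]; linarith
  have hVpos : 0 < Vfn p x := by
    have := Real.log_lt_log hR0 (by linarith : R < 1 - R)
    rw [Vfn, ← hRdef]; linarith
  have hVU : Vfn p x < Ufn x := by
    have e1 := Real.log_lt_log (by linarith : (0:ℝ) < 1 - R) (by linarith : 1 - R < 1 - x)
    have e2 := Real.log_lt_log hx0 hxR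
    rw [Ufn, Vfn, ← hRdef]; linarith
  -- derivatives
  have hU' : HasDerivAt Ufn (-1 / (1 - x) - x⁻¹) x := by
    have h1 : HasDerivAt (fun x : ℝ => 1 - x) (-1) x := by
      simpa using (hasDerivAt_id x).const_sub 1
    exact (h1.log (ne_of_gt h1x)).sub (Real.hasDerivAt_log (ne_of_gt hx0))
  have hRd : HasDerivAt (fun x : ℝ => x * (1 - p) + p * (1 - x)) (1 - 2*p) x := by
    have h1 : HasDerivAt (fun x : ℝ => x * (1 - p)) (1 - p) x := by
      simpa using (hasDerivAt_id x).mul_const (1 - p)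
    have h2 : HasDerivAt (fun x : ℝ => p * (1 - x)) (-p) x := by
      have : HasDerivAt (fun x : ℝ => 1 - x) (-1) x := by
        simpa using (hasDerivAt_id x).const_sub 1
      simpa using this.const_mul p
    have := h1.add h2
    exact this.congr_deriv (by ring)
  have hV' : HasDerivAt (Vfn p) (-(1 - 2*p) / (1 - R) - (1 - 2*p) / R) x := by
    have h1 : HasDerivAt (fun x : ℝ => 1 - (x * (1 - p) + p * (1 - x))) (-(1 - 2*p)) x := by
      simpa using hRd.const_sub 1
    have h2 := (h1.log (by rw [← hRdef]; exact ne_of_gt h1R)).sub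
      (hRd.log (by rw [← hRdef]; exact ne_of_gt hR0))
    have h3 : HasDerivAt (Vfn p)
        (-(1 - 2*p) / (1 - (x * (1 - p) + p * (1 - x))) - (1 - 2*p) / (x * (1 - p) + p * (1 - x))) x := h2
    rw [← hRdef] at h3
    exact h3
  have hq : HasDerivAt (fun x => Vfn p x / Ufn x)
      (((-(1 - 2*p) / (1 - R) - (1 - 2*p) / R) * Ufn x
        - Vfn p x * (-1 / (1 - x) - x⁻¹)) / (Ufn x) ^ 2) x :=
    hV'.div hU' (ne_of_gt hUpos)
  refine ⟨_, ?_, hq⟩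
  -- positivity of the numerator
  have hs : (0:ℝ) < x * (1 - x) := mul_pos hx0 h1x
  have hr : (0:ℝ) < R * (1 - R) := mul_pos hR0 h1R
  have h12x : (0:ℝ) < 1 - 2*x := by linarith
  have hkey0 : Ufn x * Real.sinh (Vfn p x) < Vfn p x * Real.sinh (Ufn x) :=
    aux_key hVpos hVU
  have hsU := aux_sinhU hx0 hx2
  have hsV : Real.sinh (Vfn p x) = (1 - 2*R) / (2 * (R * (1 - R))) := by
    have := aux_sinhU hR0 hR2
    rw [Vfn, ← hRdef]
    rw [Ufn] at this
    exact this
  rw [hsU, hsV] at hkey0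
  have hk : 1 - 2*R = (1 - 2*p) * (1 - 2*x) := by rw [hRdef]; ring
  -- from hkey0 derive (1-2p) * U * s < V * r
  have hkey : (1 - 2*p) * Ufn x * (x * (1 - x)) < Vfn p x * (R * (1 - R)) := by
    rw [hk] at hkey0
    rw [mul_div_assoc'] at hkey0
    rw [mul_div_assoc'] at hkey0
    rw [div_lt_div_iff₀ (by positivity) (by positivity)] at hkey0
    nlinarith [hkey0, h12x, hs, hr]
  have e1 : (-(1 - 2*p) / (1 - R) - (1 - 2*p) / R) * Ufn x
        - Vfn p x * (-1 / (1 - x) - x⁻¹)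
      = (Vfn p x * (R * (1 - R)) - (1 - 2*p) * Ufn x * (x * (1 - x)))
        / ((x * (1 - x)) * (R * (1 - R))) := by
    field_simp
    ring
  rw [e1]
  apply div_pos
  · apply div_pos
    · linarith
    · positivity
  · positivity

/-- For c = (1-e)/(1-2p) ∈ (0,1), the equation (((1-x)/x)^c + 1)⁻¹ = x(1-p)+p(1-x)
has at most one solution in (0,1/2). -/
lemma aux_mono (p : ℝ) (hp0 : 0 < p) (hp1 : p < 1/2) :
    StrictMonoOn (fun x => Vfn p x / Ufn x) (Set.Ioo (0:ℝ) (1/2)) := by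
  apply strictMonoOn_of_deriv_pos (convex_Ioo 0 (1/2))
  · intro x hx
    obtain ⟨d, _, hd⟩ := aux_deriv p hp0 hp1 hx
    exact hd.continuousAt.continuousWithinAt
  · intro x hx
    rw [interior_Ioo] at hx
    obtain ⟨d, hdpos, hd⟩ := aux_deriv p hp0 hp1 hx
    rw [hd.deriv]; exact hdpos

theorem stmt7 (p e : ℝ) (hp0 : 0 < p) (hp1 : p < 1 / 2) (he0 : 2 * p < e) (he1 : e < 1) :
    ∀ x ∈ Set.Ioo (0 : ℝ) (1 / 2), ∀ y ∈ Set.Ioo (0 : ℝ) (1 / 2),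
      (((1 - x) / x) ^ ((1 - e) / (1 - 2 * p)) + 1)⁻¹ = x * (1 - p) + p * (1 - x) →
      (((1 - y) / y) ^ ((1 - e) / (1 - 2 * p)) + 1)⁻¹ = y * (1 - p) + p * (1 - y) →
      x = y := by
  intro x hx y hy hEx hEy
  have key : ∀ z ∈ Set.Ioo (0:ℝ) (1/2),
      (((1 - z) / z) ^ ((1 - e) / (1 - 2 * p)) + 1)⁻¹ = z * (1 - p) + p * (1 - z) →
      Vfn p z / Ufn z = (1 - e) / (1 - 2 * p) := by
    rintro z ⟨hz0, hz2⟩ hE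
    set R : ℝ := z * (1 - p) + p * (1 - z) with hRdef
    have h1z : (0:ℝ) < 1 - z := by linarith
    have hR0 : 0 < R := by nlinarith
    have hR2 : R < 1/2 := by nlinarith
    have hA0 : 0 < (1 - z)/z := div_pos h1z hz0
    have h2 : ((1 - z)/z) ^ ((1 - e) / (1 - 2 * p)) + 1 = R⁻¹ :=
      inv_eq_iff_eq_inv.mp hE
    have h3 : ((1 - z)/z) ^ ((1 - e) / (1 - 2 * p)) = (1 - R)/R := by
      have : R⁻¹ - 1 = (1 - R)/R := by field_simp
      linarith [h2, this]
    have h4 := congrArg Real.log h3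
    rw [Real.log_rpow hA0, Real.log_div (ne_of_gt h1z) (ne_of_gt hz0),
      Real.log_div (by linarith : (1:ℝ) - R ≠ 0) (ne_of_gt hR0)] at h4
    have hUpos : 0 < Ufn z := by
      have := Real.log_lt_log hz0 (by linarith : z < 1 - z)
      rw [Ufn]; linarith
    have hV : Vfn p z = (1 - e) / (1 - 2 * p) * Ufn z := by
      rw [Vfn, Ufn, ← hRdef, ← h4]
    rw [hV, mul_div_assoc, div_self (ne_of_gt hUpos), mul_one]
  have hqx := key x hx hEx
  have hqy := key y hy hEy
  exact (aux_mono p hp0 hp1).injOn hx hy (hqx.trans hqy.symm)
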